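/- arXiv:2410.17070 — 5 statements merged into one kernel-verified Lean document; each statement's English description precedes it below -/
import Mathlib

section
/- Let n, p, d be positive natural numbers, let U be an n×n real diagonal matrix with strictly positive diagonal entries, let A be a p×p real positive definite matrix, and let X ∈ ℝ^{n×p}, B ∈ ℝ^{p×d}, Y ∈ ℝ^{n×d}. Define Ω = (X^⊤ U X + A^{-1})^{-1} and Γ = Ω (X^⊤ U Y + A^{-1} B). Then the d×d matrix B^⊤ A^{-1} B + Y^⊤ U Y − Γ^⊤ Ω^{-1} Γ is positive semidefinite. -/
open Matrix

lemma posSemidef_fromBlocks_diag {m n : Type*} [Fintype m] [Fintype n]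
    {A : Matrix m m ℝ} {D : Matrix n n ℝ} (hA : A.PosSemidef) (hD : D.PosSemidef) :
    (fromBlocks A 0 0 D).PosSemidef := by
  refine posSemidef_iff_dotProduct_mulVec.mpr ⟨?_, ?_⟩
  · rw [IsHermitian, fromBlocks_conjTranspose, hA.1.eq, hD.1.eq]
    simp
  · intro x
    rw [fromBlocks_mulVec]
    simp only [zero_mulVec, add_zero, zero_add, star_trivial]
    have key : x ⬝ᵥ Sum.elim (A *ᵥ (x ∘ Sum.inl)) (D *ᵥ (x ∘ Sum.inr))
        = (x ∘ Sum.inl) ⬝ᵥ (A *ᵥ (x ∘ Sum.inl)) + (x ∘ Sum.inr) ⬝ᵥ (D *ᵥ (x ∘ Sum.inr)) := by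
      rw [← sumElim_dotProduct_sumElim]
      congr 1
      exact (Sum.elim_comp_inl_inr x).symm
    rw [key]
    exact add_nonneg (by simpa using hA.dotProduct_mulVec_nonneg (x ∘ Sum.inl)) (by simpa using hD.dotProduct_mulVec_nonneg (x ∘ Sum.inr))

theorem stmt_3 (n p d : ℕ) (hn : 0 < n) (hp : 0 < p) (hd : 0 < d)
    (u : Fin n → ℝ) (hu : ∀ i, 0 < u i)
    (U : Matrix (Fin n) (Fin n) ℝ) (hU : U = Matrix.diagonal u)
    (A : Matrix (Fin p) (Fin p) ℝ) (hA : A.PosDef)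
    (X : Matrix (Fin n) (Fin p) ℝ) (B : Matrix (Fin p) (Fin d) ℝ)
    (Y : Matrix (Fin n) (Fin d) ℝ)
    (Ω : Matrix (Fin p) (Fin p) ℝ) (hΩ : Ω = (Xᵀ * U * X + A⁻¹)⁻¹)
    (Γ : Matrix (Fin p) (Fin d) ℝ) (hΓ : Γ = Ω * (Xᵀ * U * Y + A⁻¹ * B)) :
    (Bᵀ * A⁻¹ * B + Yᵀ * U * Y - Γᵀ * Ω⁻¹ * Γ).PosSemidef := by
  set M : Matrix (Fin p) (Fin p) ℝ := Xᵀ * U * X + A⁻¹ with hM_def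
  set C : Matrix (Fin p) (Fin d) ℝ := Xᵀ * U * Y + A⁻¹ * B with hC_def
  have hU' : U.PosSemidef := by
    rw [hU]; exact posSemidef_diagonal_iff.mpr fun i => (hu i).le
  have hUt : Uᵀ = U := by rw [hU, diagonal_transpose]
  have hAinv : (A⁻¹).PosDef := hA.inv
  have hAt : (A⁻¹)ᵀ = A⁻¹ := by
    have := hAinv.isHermitian.eq
    rwa [conjTranspose_eq_transpose_of_trivial] at this
  have hXUX : (Xᵀ * U * X).PosSemidef := by
    simpa using hU'.conjTranspose_mul_mul_same X
  have hM : M.PosDef := Matrix.PosDef.posSemidef_add hXUX hAinv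
  have hMdet : IsUnit M.det := hM.det_pos.ne'.isUnit
  have hMsymm : Mᵀ = M := by
    have := hM.isHermitian.eq
    rwa [conjTranspose_eq_transpose_of_trivial] at this
  have hW : (fromBlocks U 0 0 A⁻¹).PosSemidef :=
    posSemidef_fromBlocks_diag hU' hAinv.posSemidef
  have hE := hW.conjTranspose_mul_mul_same
    (fromBlocks X Y (1 : Matrix (Fin p) (Fin p) ℝ) B)
  have heq : (fromBlocks X Y (1 : Matrix (Fin p) (Fin p) ℝ) B)ᴴ *
      fromBlocks U 0 0 A⁻¹ * fromBlocks X Y (1 : Matrix (Fin p) (Fin p) ℝ) B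
      = fromBlocks M C Cᴴ (Bᵀ * A⁻¹ * B + Yᵀ * U * Y) := by
    rw [fromBlocks_conjTranspose, fromBlocks_multiply, fromBlocks_multiply]
    rw [fromBlocks_inj]
    refine ⟨?_, ?_, ?_, ?_⟩
    · simp [hM_def, Matrix.mul_assoc]
    · simp [hC_def, Matrix.mul_assoc]
    · rw [conjTranspose_eq_transpose_of_trivial]
      simp [hC_def, transpose_add, transpose_mul, hUt, hAt, Matrix.mul_assoc]
    · rw [add_comm]
      simp [Matrix.mul_assoc]
  rw [heq] at hE
  haveI : Invertible M := hM.isUnit.invertible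
  have hschur := (PosDef.fromBlocks₁₁ C (Bᵀ * A⁻¹ * B + Yᵀ * U * Y) hM).mp hE
  have hΩinv : Ω⁻¹ = M := by rw [hΩ, nonsing_inv_nonsing_inv M hMdet]
  have hΓ' : Γ = M⁻¹ * C := by rw [hΓ, hΩ]
  have hΓT : Γᵀ = Cᵀ * M⁻¹ := by
    rw [hΓ', transpose_mul, transpose_nonsing_inv, hMsymm]
  have key : Γᵀ * Ω⁻¹ * Γ = Cᴴ * M⁻¹ * C := by
    rw [hΩinv, hΓT, hΓ', conjTranspose_eq_transpose_of_trivial,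
      Matrix.mul_assoc (Cᵀ * M⁻¹), ← Matrix.mul_assoc M, mul_nonsing_inv M hMdet,
      Matrix.one_mul, Matrix.mul_assoc]
  rw [key]
  exact hschur
end

section
/- Let p be a positive natural number, let A be a p×p real positive definite matrix, and let S be a p×p real positive semidefinite matrix. Then A − (A^{-1} + 2S + S A S)^{-1} is positive semidefinite; that is, (A^{-1} + 2S + S A S)^{-1} ≼ A in the Loewner order. -/
open Matrix

theorem stmt_5 (p : ℕ) (hp : 0 < p)
    (A : Matrix (Fin p) (Fin p) ℝ) (hA : A.PosDef)
    (S : Matrix (Fin p) (Fin p) ℝ) (hS : S.PosSemidef) :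
    (A - (A⁻¹ + (2 : ℝ) • S + S * A * S)⁻¹).PosSemidef := by
  have hAinv : (A⁻¹).PosDef := hA.inv
  have hB : (A⁻¹ + S).PosDef := hAinv.add_posSemidef hS
  set B := A⁻¹ + S with hBdef
  have hAi : IsUnit A.det := isUnit_iff_ne_zero.mpr hA.det_pos.ne'
  have hBi : IsUnit B.det := isUnit_iff_ne_zero.mpr hB.det_pos.ne'
  have h2 : A * A⁻¹ = 1 := mul_nonsing_inv A hAi
  have key : A⁻¹ + (2 : ℝ) • S + S * A * S = B * A * B := by
    rw [hBdef, two_smul]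
    simp only [Matrix.add_mul, Matrix.mul_add, Matrix.mul_assoc, h2, Matrix.mul_one,
      Matrix.nonsing_inv_mul_cancel_left A S hAi]
    abel
  rw [key, Matrix.mul_inv_rev, Matrix.mul_inv_rev]
  have hdecomp : A - B⁻¹ * (A⁻¹ * B⁻¹) = B⁻¹ * (B * A * B - A⁻¹) * B⁻¹ := by
    simp only [Matrix.mul_sub, Matrix.sub_mul, Matrix.mul_assoc,
      mul_nonsing_inv B hBi, Matrix.mul_one,
      Matrix.nonsing_inv_mul_cancel_left B A hBi]
  rw [hdecomp]
  have hmid : (B * A * B - A⁻¹).PosSemidef := by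
    have he : B * A * B - A⁻¹ = (2 : ℝ) • S + S * A * S := by
      rw [← key]; abel
    rw [he, two_smul]
    have h2S : (S + S).PosSemidef := hS.add hS
    have hSAS : (S * A * S).PosSemidef := by
      have := hA.posSemidef.conjTranspose_mul_mul_same S
      rwa [hS.isHermitian] at this
    exact h2S.add hSAS
  have hBiH : (B⁻¹)ᴴ = B⁻¹ := hB.isHermitian.inv
  have := hmid.mul_mul_conjTranspose_same B⁻¹
  rwa [hBiH] at this
end

section
/- Let h : (0,∞) → [0,∞) be measurable, let d be a positive natural number, and suppose 0 < ∫₀^∞ u^{d/2} h(u) du < ∞ and ∫₀^∞ u^{d/2+2} h(u) du < ∞. Then for every c ≥ 0, (∫₀^∞ u^{d/2+2} e^{-cu} h(u) du) / (∫₀^∞ u^{d/2} e^{-cu} h(u) du) ≤ (∫₀^∞ u^{d/2+2} h(u) du) / (∫₀^∞ u^{d/2} h(u) du), where the left-hand denominator is strictly positive. -/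
open MeasureTheory Real

set_option maxHeartbeats 1000000

theorem stmt_7 (d : ℕ) (hd : 0 < d) (h : ℝ → ℝ) (hmeas : Measurable h)
    (hnonneg : ∀ u ∈ Set.Ioi (0 : ℝ), 0 ≤ h u)
    (hint0 : IntegrableOn (fun u : ℝ => u ^ ((d : ℝ) / 2) * h u) (Set.Ioi 0))
    (hpos0 : 0 < ∫ u in Set.Ioi (0 : ℝ), u ^ ((d : ℝ) / 2) * h u)
    (hint2 : IntegrableOn (fun u : ℝ => u ^ ((d : ℝ) / 2 + 2) * h u) (Set.Ioi 0)) :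
    ∀ c : ℝ, 0 ≤ c →
      0 < (∫ u in Set.Ioi (0 : ℝ), u ^ ((d : ℝ) / 2) * Real.exp (-c * u) * h u) ∧
      (∫ u in Set.Ioi (0 : ℝ), u ^ ((d : ℝ) / 2 + 2) * Real.exp (-c * u) * h u) /
          (∫ u in Set.Ioi (0 : ℝ), u ^ ((d : ℝ) / 2) * Real.exp (-c * u) * h u) ≤
        (∫ u in Set.Ioi (0 : ℝ), u ^ ((d : ℝ) / 2 + 2) * h u) /
          (∫ u in Set.Ioi (0 : ℝ), u ^ ((d : ℝ) / 2) * h u) := by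
  intro c hc
  set p : ℝ := (d : ℝ) / 2 with hp
  set f0 : ℝ → ℝ := fun u => u ^ p * h u with hf0
  set f2 : ℝ → ℝ := fun u => u ^ (p + 2) * h u with hf2
  set f0c : ℝ → ℝ := fun u => u ^ p * Real.exp (-c * u) * h u with hf0c
  set f2c : ℝ → ℝ := fun u => u ^ (p + 2) * Real.exp (-c * u) * h u with hf2c
  set μ : Measure ℝ := volume.restrict (Set.Ioi (0 : ℝ)) with hμ
  have hmrp : ∀ q : ℝ, Measurable fun x : ℝ => x ^ q := fun q => by measurability
  have hme : Measurable fun u : ℝ => Real.exp (-c * u) := by fun_prop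
  have hm0c : Measurable f0c := ((hmrp p).mul hme).mul hmeas
  have hm2c : Measurable f2c := ((hmrp (p+2)).mul hme).mul hmeas
  -- exp bound
  have hexp_le : ∀ u : ℝ, 0 < u → Real.exp (-c * u) ≤ 1 := by
    intro u hu
    rw [Real.exp_le_one_iff]
    nlinarith
  have hexp_pos : ∀ u : ℝ, (0:ℝ) < Real.exp (-c * u) := fun u => Real.exp_pos _
  -- integrability of tilted integrands
  have hInt0c : Integrable f0c μ := by
    refine hint0.mono' hm0c.aestronglyMeasurable ?_
    filter_upwards [ae_restrict_mem measurableSet_Ioi] with u hu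
    have hu0 : (0:ℝ) < u := hu
    have h1 : 0 ≤ u ^ p := Real.rpow_nonneg hu0.le _
    have h2 : 0 ≤ h u := hnonneg u hu
    rw [Real.norm_eq_abs, abs_of_nonneg (by positivity)]
    have := hexp_le u hu0
    simp only [hf0c, hf0]
    nlinarith [mul_nonneg (mul_nonneg h1 h2) (sub_nonneg.mpr this)]
  have hInt2c : Integrable f2c μ := by
    refine hint2.mono' hm2c.aestronglyMeasurable ?_
    filter_upwards [ae_restrict_mem measurableSet_Ioi] with u hu
    have hu0 : (0:ℝ) < u := hu
    have h1 : 0 ≤ u ^ (p + 2) := Real.rpow_nonneg hu0.le _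
    have h2 : 0 ≤ h u := hnonneg u hu
    rw [Real.norm_eq_abs, abs_of_nonneg (by positivity)]
    have := hexp_le u hu0
    simp only [hf2c, hf2]
    nlinarith [mul_nonneg (mul_nonneg h1 h2) (sub_nonneg.mpr this)]
  -- positivity of the tilted denominator
  have hA0c_nonneg : 0 ≤ ∫ u, f0c u ∂μ := by
    refine setIntegral_nonneg measurableSet_Ioi ?_
    intro u hu
    have hu0 : (0:ℝ) < u := hu
    have := hnonneg u hu
    have h1 : 0 ≤ u ^ p := Real.rpow_nonneg hu0.le _
    positivity
  have hA0c_pos : 0 < ∫ u, f0c u ∂μ := by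
    rcases hA0c_nonneg.lt_or_eq with hlt | heq
    · exact hlt
    · exfalso
      have hae0 : f0c =ᵐ[μ] 0 := by
        have hnn : 0 ≤ᵐ[μ] f0c := by
          filter_upwards [ae_restrict_mem measurableSet_Ioi] with u hu
          have hu0 : (0:ℝ) < u := hu
          have := hnonneg u hu
          have h1 : 0 ≤ u ^ p := Real.rpow_nonneg hu0.le _
          positivity
        exact (integral_eq_zero_iff_of_nonneg_ae hnn hInt0c).mp heq.symm
      have hae0' : f0 =ᵐ[μ] 0 := by
        filter_upwards [hae0, ae_restrict_mem measurableSet_Ioi] with u hu huIoi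
        have he : Real.exp (-c * u) ≠ 0 := (hexp_pos u).ne'
        have : (u ^ p * h u) * Real.exp (-c * u) = 0 := by
          have := hu
          simp only [hf0c, Pi.zero_apply] at this ⊢
          nlinarith [this]
        rcases mul_eq_zero.mp this with h' | h'
        · simpa [hf0] using h'
        · exact absurd h' he
      have : (∫ u, f0 u ∂μ) = 0 := by
        rw [integral_congr_ae hae0']
        simp
      rw [hμ] at this
      exact absurd this (ne_of_gt hpos0)
  refine ⟨hA0c_pos, ?_⟩
  -- key pointwise inequality
  have key : ∀ x ∈ Set.Ioi (0:ℝ), ∀ y ∈ Set.Ioi (0:ℝ),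
      f2c x * f0 y + f0 x * f2c y - (f2 x * f0c y + f0c x * f2 y) ≤ 0 := by
    intro x hx y hy
    have hx0 : (0:ℝ) < x := hx
    have hy0 : (0:ℝ) < y := hy
    have ha : 0 ≤ x ^ p * h x := mul_nonneg (Real.rpow_nonneg hx0.le _) (hnonneg x hx)
    have hb : 0 ≤ y ^ p * h y := mul_nonneg (Real.rpow_nonneg hy0.le _) (hnonneg y hy)
    have hfac : f2c x * f0 y + f0 x * f2c y - (f2 x * f0c y + f0c x * f2 y)
        = (x ^ p * h x) * (y ^ p * h y) *
          ((x ^ (2:ℝ) - y ^ (2:ℝ)) * (Real.exp (-c * x) - Real.exp (-c * y))) := by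
      simp only [hf2c, hf2, hf0, hf0c, Real.rpow_add hx0, Real.rpow_add hy0]
      ring
    rw [hfac]
    rcases le_total x y with hxy | hxy
    · have h1 : x ^ (2:ℝ) ≤ y ^ (2:ℝ) := Real.rpow_le_rpow hx0.le hxy (by norm_num)
      have h2 : Real.exp (-c * y) ≤ Real.exp (-c * x) := Real.exp_le_exp.mpr (by nlinarith)
      have hQ : (x ^ (2:ℝ) - y ^ (2:ℝ)) * (Real.exp (-c * x) - Real.exp (-c * y)) ≤ 0 :=
        mul_nonpos_iff.mpr (Or.inr ⟨by linarith, by linarith⟩)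
      nlinarith [mul_nonneg ha hb]
    · have h1 : y ^ (2:ℝ) ≤ x ^ (2:ℝ) := Real.rpow_le_rpow hy0.le hxy (by norm_num)
      have h2 : Real.exp (-c * x) ≤ Real.exp (-c * y) := Real.exp_le_exp.mpr (by nlinarith)
      have hQ : (x ^ (2:ℝ) - y ^ (2:ℝ)) * (Real.exp (-c * x) - Real.exp (-c * y)) ≤ 0 :=
        mul_nonpos_iff.mpr (Or.inl ⟨by linarith, by linarith⟩)
      nlinarith [mul_nonneg ha hb]
  -- product integrabilities
  have hI1 : Integrable (fun z : ℝ × ℝ => f2c z.1 * f0 z.2) (μ.prod μ) :=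
    hInt2c.mul_prod hint0
  have hI2 : Integrable (fun z : ℝ × ℝ => f0 z.1 * f2c z.2) (μ.prod μ) :=
    hint0.mul_prod hInt2c
  have hI3 : Integrable (fun z : ℝ × ℝ => f2 z.1 * f0c z.2) (μ.prod μ) :=
    hint2.mul_prod hInt0c
  have hI4 : Integrable (fun z : ℝ × ℝ => f0c z.1 * f2 z.2) (μ.prod μ) :=
    hInt0c.mul_prod hint2
  have hval : ∫ z : ℝ × ℝ, (f2c z.1 * f0 z.2 + f0 z.1 * f2c z.2
        - (f2 z.1 * f0c z.2 + f0c z.1 * f2 z.2)) ∂(μ.prod μ)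
      = (∫ u, f2c u ∂μ) * (∫ u, f0 u ∂μ) + (∫ u, f0 u ∂μ) * (∫ u, f2c u ∂μ)
        - ((∫ u, f2 u ∂μ) * (∫ u, f0c u ∂μ) + (∫ u, f0c u ∂μ) * (∫ u, f2 u ∂μ)) := by
    have hIadd1 : Integrable (fun z : ℝ × ℝ => f2c z.1 * f0 z.2 + f0 z.1 * f2c z.2) (μ.prod μ) :=
      hI1.add hI2
    have hIadd2 : Integrable (fun z : ℝ × ℝ => f2 z.1 * f0c z.2 + f0c z.1 * f2 z.2) (μ.prod μ) :=
      hI3.add hI4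
    rw [integral_sub hIadd1 hIadd2, integral_add hI1 hI2, integral_add hI3 hI4,
      integral_prod_mul, integral_prod_mul, integral_prod_mul, integral_prod_mul]
  have hnonpos : ∫ z : ℝ × ℝ, (f2c z.1 * f0 z.2 + f0 z.1 * f2c z.2
        - (f2 z.1 * f0c z.2 + f0c z.1 * f2 z.2)) ∂(μ.prod μ) ≤ 0 := by
    have hae : ∀ᵐ z ∂(μ.prod μ), f2c z.1 * f0 z.2 + f0 z.1 * f2c z.2
        - (f2 z.1 * f0c z.2 + f0c z.1 * f2 z.2) ≤ 0 := by
      rw [hμ, Measure.prod_restrict]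
      refine (ae_restrict_iff' (measurableSet_Ioi.prod measurableSet_Ioi)).mpr ?_
      exact Filter.Eventually.of_forall fun z hz => key z.1 hz.1 z.2 hz.2
    refine integral_nonpos_of_ae ?_
    filter_upwards [hae] with z hz
    simpa using hz
  rw [hval] at hnonpos
  have hmain : (∫ u, f2c u ∂μ) * (∫ u, f0 u ∂μ) ≤ (∫ u, f2 u ∂μ) * (∫ u, f0c u ∂μ) := by
    linarith
  have hA0_pos : 0 < ∫ u, f0 u ∂μ := hpos0
  rw [div_le_div_iff₀ hA0c_pos hA0_pos]
  exact hmain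
end

section
/- Let n, p, d be positive natural numbers with n ≥ p + d, and let X ∈ ℝ^{n×p}, Y ∈ ℝ^{n×d} be such that the concatenated matrix W = (X Y) ∈ ℝ^{n×(p+d)} has full column rank p + d. Write Q_X = I_n − X (X^⊤ X)^{-1} X^⊤ and Q_Y = I_n − Y (Y^⊤ Y)^{-1} Y^⊤. Then (Y^⊤ Q_X Y)^{-1} = (Y^⊤ Y)^{-1} + (Y^⊤ Y)^{-1} Y^⊤ X (X^⊤ Q_Y X)^{-1} X^⊤ Y (Y^⊤ Y)^{-1}. -/
open Matrix

theorem stmt_14 (n p d : ℕ) (hp : 0 < p) (hd : 0 < d) (hn : p + d ≤ n)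
    (X : Matrix (Fin n) (Fin p) ℝ) (Y : Matrix (Fin n) (Fin d) ℝ)
    (hrank : (Matrix.fromCols X Y).rank = p + d)
    (QX : Matrix (Fin n) (Fin n) ℝ)
    (hQX : QX = (1 : Matrix (Fin n) (Fin n) ℝ) - X * (Xᵀ * X)⁻¹ * Xᵀ)
    (QY : Matrix (Fin n) (Fin n) ℝ)
    (hQY : QY = (1 : Matrix (Fin n) (Fin n) ℝ) - Y * (Yᵀ * Y)⁻¹ * Yᵀ) :
    (Yᵀ * QX * Y)⁻¹ =
      (Yᵀ * Y)⁻¹ + (Yᵀ * Y)⁻¹ * Yᵀ * X * (Xᵀ * QY * X)⁻¹ * Xᵀ * Y * (Yᵀ * Y)⁻¹ := by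
  set W := Matrix.fromCols X Y with hW
  -- injectivity of W *ᵥ ·
  have hker : LinearMap.ker W.mulVecLin = ⊥ := by
    have h1 := LinearMap.finrank_range_add_finrank_ker W.mulVecLin
    have h0 : W.rank = Module.finrank ℝ ↥(LinearMap.range W.mulVecLin) := rfl
    have h2 : Module.finrank ℝ ((Fin p ⊕ Fin d) → ℝ) = p + d := by
      simp
    rw [← h0, hrank, h2] at h1
    have h3 : Module.finrank ℝ ↥(LinearMap.ker W.mulVecLin) = 0 := by omega
    exact Submodule.finrank_eq_zero.mp h3
  have hWinj : ∀ u v, X *ᵥ u + Y *ᵥ v = 0 → u = 0 ∧ v = 0 := by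
    intro u v huv
    have : Sum.elim u v ∈ LinearMap.ker W.mulVecLin := by
      simp [Matrix.mulVecLin_apply, hW, huv]
    rw [hker, Submodule.mem_bot] at this
    constructor
    · ext i; exact congrFun this (Sum.inl i)
    · ext i; exact congrFun this (Sum.inr i)
  -- X and Y have trivial kernels
  have hXker : ∀ u, X *ᵥ u = 0 → u = 0 := fun u hu =>
    (hWinj u 0 (by simp [hu])).1
  have hYker : ∀ v, Y *ᵥ v = 0 → v = 0 := fun v hv =>
    (hWinj 0 v (by simp [hv])).2
  -- Gram matrices are units
  have gram_unit : ∀ {k : ℕ} (M : Matrix (Fin n) (Fin k) ℝ),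
      (∀ u, M *ᵥ u = 0 → u = 0) → IsUnit (Mᵀ * M) := by
    intro k M hM
    rw [← Matrix.mulVec_injective_iff_isUnit]
    have hk : LinearMap.ker (Mᵀ * M).mulVecLin = ⊥ := by
      rw [Matrix.ker_mulVecLin_transpose_mul_self]
      rw [Submodule.eq_bot_iff]
      intro u hu
      exact hM u hu
    intro a b hab
    have : (Mᵀ * M) *ᵥ (a - b) = 0 := by
      rw [Matrix.mulVec_sub, hab, sub_self]
    have hmem : a - b ∈ LinearMap.ker (Mᵀ * M).mulVecLin := by
      rw [LinearMap.mem_ker, Matrix.mulVecLin_apply]; exact this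
    rw [hk, Submodule.mem_bot] at hmem
    exact sub_eq_zero.mp hmem
  have hXX : IsUnit (Xᵀ * X) := gram_unit X hXker
  have hYY : IsUnit (Yᵀ * Y) := gram_unit Y hYker
  -- QY is symmetric idempotent
  have hYYsymm : ((Yᵀ * Y)⁻¹)ᵀ = (Yᵀ * Y)⁻¹ := by
    rw [Matrix.transpose_nonsing_inv, Matrix.transpose_mul, Matrix.transpose_transpose]
  have hQYsymm : QYᵀ = QY := by
    rw [hQY]
    simp [Matrix.transpose_sub, Matrix.transpose_mul, Matrix.transpose_transpose,
      hYYsymm, Matrix.mul_assoc]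
  have hQYidem : QY * QY = QY := by
    rw [hQY]
    have : Y * (Yᵀ * Y)⁻¹ * Yᵀ * (Y * (Yᵀ * Y)⁻¹ * Yᵀ) = Y * (Yᵀ * Y)⁻¹ * Yᵀ := by
      have h1 : (Yᵀ * Y)⁻¹ * (Yᵀ * Y) = 1 := Matrix.nonsing_inv_mul _ ((Matrix.isUnit_iff_isUnit_det _).mp hYY)
      calc Y * (Yᵀ * Y)⁻¹ * Yᵀ * (Y * (Yᵀ * Y)⁻¹ * Yᵀ)
          = Y * ((Yᵀ * Y)⁻¹ * (Yᵀ * Y)) * ((Yᵀ * Y)⁻¹ * Yᵀ) := by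
            simp only [Matrix.mul_assoc]
        _ = Y * (Yᵀ * Y)⁻¹ * Yᵀ := by rw [h1]; simp [Matrix.mul_assoc]
    simp only [Matrix.sub_mul, Matrix.mul_sub, Matrix.one_mul, Matrix.mul_one, this]
    abel
  -- Xᵀ * QY * X is a unit
  have hT : IsUnit (Xᵀ * QY * X) := by
    have hfact : (QY * X)ᵀ * (QY * X) = Xᵀ * QY * X := by
      rw [Matrix.transpose_mul, hQYsymm, Matrix.mul_assoc, ← Matrix.mul_assoc QY QY X,
        hQYidem, Matrix.mul_assoc]
    rw [← hfact]
    apply gram_unit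
    intro u hu
    have hQYXu : QY *ᵥ (X *ᵥ u) = 0 := by
      rw [Matrix.mulVec_mulVec]; exact hu
    have hXu : X *ᵥ u = Y *ᵥ (((Yᵀ * Y)⁻¹ * Yᵀ) *ᵥ (X *ᵥ u)) := by
      have h := hQYXu
      rw [hQY, Matrix.sub_mulVec, sub_eq_zero, Matrix.one_mulVec] at h
      conv_lhs => rw [h]
      simp only [Matrix.mulVec_mulVec, Matrix.mul_assoc]
    obtain ⟨w, hw⟩ : ∃ w, X *ᵥ u = Y *ᵥ w := ⟨_, hXu⟩
    exact (hWinj u (-w) (by rw [Matrix.mulVec_neg, hw, add_neg_cancel])).1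
  -- Express Yᵀ * QX * Y in Woodbury form
  have hLHS : Yᵀ * QX * Y = Yᵀ * Y + (Yᵀ * X) * (Xᵀ * X)⁻¹ * (-(Xᵀ * Y)) := by
    rw [hQX]
    simp only [Matrix.mul_sub, Matrix.sub_mul, Matrix.mul_one, Matrix.mul_neg,
      Matrix.mul_assoc]
    abel
  have hT' : ((Xᵀ * X)⁻¹)⁻¹ + (-(Xᵀ * Y)) * (Yᵀ * Y)⁻¹ * (Yᵀ * X) = Xᵀ * QY * X := by
    rw [Matrix.nonsing_inv_nonsing_inv _ ((Matrix.isUnit_iff_isUnit_det _).mp hXX), hQY]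
    simp only [Matrix.mul_sub, Matrix.sub_mul, Matrix.mul_one, Matrix.neg_mul,
      Matrix.mul_assoc]
    abel
  have hwood := Matrix.add_mul_mul_inv_eq_sub (Yᵀ * Y) (Yᵀ * X) ((Xᵀ * X)⁻¹) (-(Xᵀ * Y))
    hYY (Matrix.isUnit_nonsing_inv_iff.mpr hXX) (hT' ▸ hT)
  rw [hLHS, hwood, hT']
  simp only [Matrix.mul_neg, Matrix.neg_mul, sub_neg_eq_add, Matrix.mul_assoc]
end

section
/- Let n, p, d be positive natural numbers with n ≥ p + d, and let X ∈ ℝ^{n×p}, Y ∈ ℝ^{n×d} be such that the concatenated matrix W = (X Y) ∈ ℝ^{n×(p+d)} has full column rank p + d. Write Q_X = I_n − X (X^⊤ X)^{-1} X^⊤ and Q_Y = I_n − Y (Y^⊤ Y)^{-1} Y^⊤, and set Γ = (X^⊤ X)^{-1} X^⊤ Y. Then Γ (Y^⊤ Q_X Y)^{-1} Γ^⊤ = (X^⊤ Q_Y X)^{-1} − (X^⊤ X)^{-1}. -/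
open Matrix

lemma posDef_gram {m k : Type*} [Fintype m] [Fintype k] (W : Matrix m k ℝ)
    (h : ∀ v, W *ᵥ v = 0 → v = 0) : (Wᵀ * W).PosDef := by
  rw [Matrix.posDef_iff_dotProduct_mulVec]
  constructor
  · have := (Matrix.posSemidef_conjTranspose_mul_self W).1
    simpa using this
  · intro x hx
    have hWx : W *ᵥ x ≠ 0 := fun h0 => hx (h x h0)
    have e : star x ⬝ᵥ ((Wᵀ * W) *ᵥ x) = (W *ᵥ x) ⬝ᵥ (W *ᵥ x) := by
      rw [star_trivial, ← Matrix.mulVec_mulVec, Matrix.dotProduct_mulVec,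
        Matrix.vecMul_transpose]
    rw [e]
    refine lt_of_le_of_ne ?_ ?_
    · exact Finset.sum_nonneg fun i _ => mul_self_nonneg _
    · intro hc
      exact hWx (dotProduct_self_eq_zero.mp hc.symm)

open Module in
lemma ker_of_rank {m k : Type*} [Fintype m] [Fintype k] [DecidableEq k]
    (W : Matrix m k ℝ) (h : W.rank = Fintype.card k) :
    ∀ v, W *ᵥ v = 0 → v = 0 := by
  have h1 := LinearMap.finrank_range_add_finrank_ker W.mulVecLin
  rw [show finrank ℝ (LinearMap.range W.mulVecLin) = Fintype.card k from h,
    finrank_pi] at h1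
  have hker : LinearMap.ker W.mulVecLin = ⊥ :=
    Submodule.finrank_eq_zero.mp (by omega)
  intro v hv
  have : v ∈ LinearMap.ker W.mulVecLin := hv
  rw [hker] at this
  simpa using this

lemma woodbury {p d : Type*} [Fintype p] [Fintype d] [DecidableEq p] [DecidableEq d]
    (A : Matrix p p ℝ) (B : Matrix p d ℝ) (C : Matrix d p ℝ) (D : Matrix d d ℝ)
    (hA : IsUnit A.det) (hD : IsUnit D.det) (hS : IsUnit (D - C * A⁻¹ * B).det) :
    (A - B * D⁻¹ * C)⁻¹ = A⁻¹ + A⁻¹ * B * (D - C * A⁻¹ * B)⁻¹ * C * A⁻¹ := by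
  set S := D - C * A⁻¹ * B with hSdef
  refine (Matrix.inv_eq_right_inv ?_)
  have hCAB : C * A⁻¹ * B = D - S := by rw [hSdef, sub_sub_cancel]
  set M := S⁻¹ * (C * A⁻¹) with hM
  have h4 : C * (A⁻¹ * (B * M)) = D * M - S * M := by
    have h := congrArg (fun Z => Z * M) hCAB
    simpa only [Matrix.sub_mul, Matrix.mul_assoc] using h
  have hAA : A * A⁻¹ = 1 := Matrix.mul_nonsing_inv _ hA
  have hDD : D⁻¹ * D = 1 := Matrix.nonsing_inv_mul _ hD
  have hSS : S * S⁻¹ = 1 := Matrix.mul_nonsing_inv _ hS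
  calc (A - B * D⁻¹ * C) * (A⁻¹ + A⁻¹ * B * S⁻¹ * C * A⁻¹)
      = A * A⁻¹ + A * (A⁻¹ * (B * M)) - B * (D⁻¹ * (C * A⁻¹))
        - B * (D⁻¹ * (C * (A⁻¹ * (B * M)))) := by
        simp only [hM, Matrix.sub_mul, Matrix.mul_add, Matrix.mul_assoc]
        abel
    _ = 1 := by
        have hSM : S * M = C * A⁻¹ := by
          rw [hM, Matrix.mul_nonsing_inv_cancel_left _ _ hS]
        rw [h4, hAA, Matrix.mul_nonsing_inv_cancel_left _ _ hA, Matrix.mul_sub,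
          ← Matrix.mul_assoc D⁻¹ D M, hDD, Matrix.one_mul, hSM]
        simp only [Matrix.mul_sub]
        abel

theorem stmt_15 (n p d : ℕ) (hp : 0 < p) (hd : 0 < d) (hn : p + d ≤ n)
    (X : Matrix (Fin n) (Fin p) ℝ) (Y : Matrix (Fin n) (Fin d) ℝ)
    (hrank : (Matrix.fromCols X Y).rank = p + d)
    (QX : Matrix (Fin n) (Fin n) ℝ)
    (hQX : QX = (1 : Matrix (Fin n) (Fin n) ℝ) - X * (Xᵀ * X)⁻¹ * Xᵀ)
    (QY : Matrix (Fin n) (Fin n) ℝ)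
    (hQY : QY = (1 : Matrix (Fin n) (Fin n) ℝ) - Y * (Yᵀ * Y)⁻¹ * Yᵀ)
    (Γ : Matrix (Fin p) (Fin d) ℝ) (hΓ : Γ = (Xᵀ * X)⁻¹ * (Xᵀ * Y)) :
    Γ * (Yᵀ * QX * Y)⁻¹ * Γᵀ = (Xᵀ * QY * X)⁻¹ - (Xᵀ * X)⁻¹ := by
  subst hQX hQY hΓ
  set W := Matrix.fromCols X Y with hW
  have hker : ∀ v, W *ᵥ v = 0 → v = 0 := by
    apply ker_of_rank
    simpa using hrank
  have hkerX : ∀ v, X *ᵥ v = 0 → v = 0 := by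
    intro v hv
    have h0 : W *ᵥ (Sum.elim v 0) = 0 := by
      rw [hW, Matrix.fromCols_mulVec_sumElim, hv, Matrix.mulVec_zero, add_zero]
    have := hker _ h0
    funext i
    exact congrFun this (Sum.inl i)
  have hkerY : ∀ v, Y *ᵥ v = 0 → v = 0 := by
    intro v hv
    have h0 : W *ᵥ (Sum.elim 0 v) = 0 := by
      rw [hW, Matrix.fromCols_mulVec_sumElim, hv, Matrix.mulVec_zero, zero_add]
    have := hker _ h0
    funext i
    exact congrFun this (Sum.inr i)
  have hA : (Xᵀ * X).PosDef := posDef_gram X hkerX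
  have hD : (Yᵀ * Y).PosDef := posDef_gram Y hkerY
  have hM : (Wᵀ * W).PosDef := posDef_gram W hker
  have hAdet : IsUnit (Xᵀ * X).det := isUnit_iff_ne_zero.mpr hA.det_pos.ne'
  have hDdet : IsUnit (Yᵀ * Y).det := isUnit_iff_ne_zero.mpr hD.det_pos.ne'
  have hMdet : IsUnit (Wᵀ * W).det := isUnit_iff_ne_zero.mpr hM.det_pos.ne'
  have hblock : Wᵀ * W = Matrix.fromBlocks (Xᵀ * X) (Xᵀ * Y) (Yᵀ * X) (Yᵀ * Y) := by
    rw [hW, Matrix.transpose_fromCols, Matrix.fromRows_mul_fromCols]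
  have hSdet : IsUnit (Yᵀ * Y - Yᵀ * X * (Xᵀ * X)⁻¹ * (Xᵀ * Y)).det := by
    letI := (Xᵀ * X).invertibleOfIsUnitDet hAdet
    have h := Matrix.det_fromBlocks₁₁ (Xᵀ * X) (Xᵀ * Y) (Yᵀ * X) (Yᵀ * Y)
    rw [invOf_eq_nonsing_inv, ← hblock] at h
    rw [h] at hMdet
    exact isUnit_of_mul_isUnit_right hMdet
  have hTdet : IsUnit (Xᵀ * X - Xᵀ * Y * (Yᵀ * Y)⁻¹ * (Yᵀ * X)).det := by
    letI := (Yᵀ * Y).invertibleOfIsUnitDet hDdet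
    have h := Matrix.det_fromBlocks₂₂ (Xᵀ * X) (Xᵀ * Y) (Yᵀ * X) (Yᵀ * Y)
    rw [invOf_eq_nonsing_inv, ← hblock] at h
    rw [h] at hMdet
    exact isUnit_of_mul_isUnit_right hMdet
  have hQXY : Yᵀ * ((1 : Matrix (Fin n) (Fin n) ℝ) - X * (Xᵀ * X)⁻¹ * Xᵀ) * Y
      = Yᵀ * Y - Yᵀ * X * (Xᵀ * X)⁻¹ * (Xᵀ * Y) := by
    simp only [Matrix.mul_sub, Matrix.sub_mul, Matrix.mul_one, Matrix.mul_assoc]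
  have hQYX : Xᵀ * ((1 : Matrix (Fin n) (Fin n) ℝ) - Y * (Yᵀ * Y)⁻¹ * Yᵀ) * X
      = Xᵀ * X - Xᵀ * Y * (Yᵀ * Y)⁻¹ * (Yᵀ * X) := by
    simp only [Matrix.mul_sub, Matrix.sub_mul, Matrix.mul_one, Matrix.mul_assoc]
  have hΓT : ((Xᵀ * X)⁻¹ * (Xᵀ * Y))ᵀ = Yᵀ * X * (Xᵀ * X)⁻¹ := by
    simp [Matrix.transpose_mul, Matrix.transpose_nonsing_inv, Matrix.mul_assoc]
  rw [hQXY, hQYX, hΓT, woodbury (Xᵀ * X) (Xᵀ * Y) (Yᵀ * X) (Yᵀ * Y) hAdet hDdet hSdet,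
    add_sub_cancel_left]
  simp only [Matrix.mul_assoc]
end
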